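/- Let q be a real number with q > 1 and let N be a nonnegative integer. Suppose X : ℕ → ℝ satisfies X(1) = q^{2N} and, for every m ≥ 1, the recursion X(m) = q^{2mN} − Σ_{i=1}^{m−1} [m−1 choose i−1]_q · (∏_{j=i+1}^{m} (q^j + 1)) · X(i). Then for every m ≥ 1 one has X(m) = Σ_{i=1}^{m} (−1)^{m−i} · q^{(m−i)(m−i−1)/2} · [m−1 choose i−1]_q · (∏_{j=i+1}^{m} (q^j + 1)) · q^{2iN}. -/

import Mathlib

/-- The Gaussian binomial coefficient `[n choose k]_q` for a real base `q`. -/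
noncomputable def gbinom (q : ℝ) (n k : ℕ) : ℝ :=
  ∏ j ∈ Finset.Icc 1 k, (q ^ (n - k + j) - 1) / (q ^ j - 1)

noncomputable def phiP (q : ℝ) (n : ℕ) : ℝ := ∏ j ∈ Finset.Icc 1 n, (q ^ j - 1)

lemma Icc_one_eq_Ioc (n : ℕ) : Finset.Icc 1 n = Finset.Ioc 0 n := by
  ext x; simp [Finset.mem_Icc, Finset.mem_Ioc]; omega

lemma phiP_zero (q : ℝ) : phiP q 0 = 1 := by simp [phiP]

lemma phiP_succ (q : ℝ) (n : ℕ) : phiP q (n + 1) = phiP q n * (q ^ (n + 1) - 1) :=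
  Finset.prod_Icc_succ_top (by omega) _

lemma pow_sub_one_ne {q : ℝ} (hq : 1 < q) {j : ℕ} (hj : 1 ≤ j) : q ^ j - 1 ≠ 0 := by
  have : 1 < q ^ j := one_lt_pow₀ hq (by omega)
  linarith

lemma phiP_ne_zero {q : ℝ} (hq : 1 < q) (n : ℕ) : phiP q n ≠ 0 := by
  apply Finset.prod_ne_zero_iff.2
  intro j hj
  exact pow_sub_one_ne hq (Finset.mem_Icc.1 hj).1

lemma phiP_split (q : ℝ) (c k : ℕ) :
    phiP q (c + k) = phiP q c * ∏ j ∈ Finset.Icc 1 k, (q ^ (c + j) - 1) := by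
  unfold phiP
  rw [Icc_one_eq_Ioc, Icc_one_eq_Ioc, Icc_one_eq_Ioc,
    ← Finset.prod_Ioc_consecutive (fun j => (q ^ j - 1)) (Nat.zero_le c) (by omega : c ≤ c + k)]
  congr 1
  rw [show Finset.Ioc c (c + k) = (Finset.Ioc 0 k).map (addLeftEmbedding c) by
    rw [Finset.map_add_left_Ioc]; ring_nf, Finset.prod_map]
  rfl

lemma gbinom_eq_phiP {q : ℝ} (hq : 1 < q) {n k : ℕ} (h : k ≤ n) :
    gbinom q n k = phiP q n / (phiP q k * phiP q (n - k)) := by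
  obtain ⟨c, rfl⟩ : ∃ c, n = c + k := ⟨n - k, by omega⟩
  have h2 : c + k - k = c := by omega
  rw [h2, gbinom, show c + k - k = c from h2, Finset.prod_div_distrib, phiP_split q c k,
    mul_comm (phiP q k) (phiP q c), mul_div_mul_left _ _ (phiP_ne_zero hq c)]
  rfl

noncomputable def gbq (q : ℝ) (n k : ℕ) : ℝ :=
  if k ≤ n then phiP q n / (phiP q k * phiP q (n - k)) else 0

lemma gbinom_eq_gbq {q : ℝ} (hq : 1 < q) {n k : ℕ} (h : k ≤ n) :
    gbinom q n k = gbq q n k := by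
  rw [gbinom_eq_phiP hq h, gbq, if_pos h]

lemma gbq_self {q : ℝ} (hq : 1 < q) (n : ℕ) : gbq q n n = 1 := by
  rw [gbq, if_pos le_rfl, Nat.sub_self, phiP_zero, mul_one]
  exact div_self (phiP_ne_zero hq n)

lemma gbq_zero {q : ℝ} (hq : 1 < q) (n : ℕ) : gbq q n 0 = 1 := by
  rw [gbq, if_pos (Nat.zero_le n), phiP_zero, Nat.sub_zero, one_mul]
  exact div_self (phiP_ne_zero hq n)

lemma gbq_pascal {q : ℝ} (hq : 1 < q) (n d : ℕ) (hd : 1 ≤ d) :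
    gbq q (n + 1) d = gbq q n d + q ^ (n + 1 - d) * gbq q n (d - 1) := by
  obtain ⟨e, rfl⟩ : ∃ e, d = e + 1 := ⟨d - 1, by omega⟩
  rcases le_or_gt (e + 1) n with h | h
  · obtain ⟨c, rfl⟩ : ∃ c, n = e + 1 + c := ⟨n - (e + 1), by omega⟩
    rw [gbq, if_pos (by omega), gbq, if_pos (by omega), gbq, if_pos (by omega)]
    simp only [show e + 1 - 1 = e by omega, show e + 1 + c + 1 - (e + 1) = c + 1 by omega,
      show e + 1 + c - (e + 1) = c by omega, show e + 1 + c - e = c + 1 by omega]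
    rw [show e + 1 + c + 1 = (e + 1 + c) + 1 by ring, phiP_succ q (e + 1 + c),
      phiP_succ q c, phiP_succ q e]
    have hc := phiP_ne_zero hq c
    have he := phiP_ne_zero hq e
    have hn := phiP_ne_zero hq (e + 1 + c)
    have hqc := pow_sub_one_ne hq (show 1 ≤ c + 1 by omega)
    have hqe := pow_sub_one_ne hq (show 1 ≤ e + 1 by omega)
    field_simp
    rw [show e + 1 + c + 1 = (c + 1) + (e + 1) by ring, pow_add]
    ring
  · rcases eq_or_lt_of_le (show n ≤ e by omega) with rfl | hlt
    · -- d = n + 1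
      rw [gbq_self hq, gbq, if_neg (by omega), show n + 1 - 1 = n by omega,
        show n + 1 - (n + 1) = 0 by omega, pow_zero, gbq_self hq]
      ring
    · rw [gbq, if_neg (by omega), gbq, if_neg (by omega), gbq, if_neg (by omega)]
      ring

lemma gbq_overflow (q : ℝ) {n k : ℕ} (h : n < k) : gbq q n k = 0 := by
  rw [gbq, if_neg (by omega)]

lemma tri (e : ℕ) : (e + 1) * e / 2 = e * (e - 1) / 2 + e := by
  rcases e with _ | f
  · simp
  · rw [show (f + 1 + 1) * (f + 1) = (f + 1) * f + 2 * (f + 1) by ring,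
      show f + 1 - 1 = f by omega]
    omega

lemma alt_step {q : ℝ} (hq : 1 < q) (n : ℕ) :
    ∑ d ∈ Finset.range (n + 2), (-1 : ℝ) ^ d * q ^ (d * (d - 1) / 2) * gbq q (n + 1) d
    = (1 - q ^ n) * ∑ d ∈ Finset.range (n + 1), (-1 : ℝ) ^ d * q ^ (d * (d - 1) / 2) * gbq q n d := by
  rw [Finset.sum_range_succ' (fun d => (-1 : ℝ) ^ d * q ^ (d * (d - 1) / 2) * gbq q (n + 1) d) (n + 1)]
  have hrw : ∀ e ∈ Finset.range (n + 1),
      (-1 : ℝ) ^ (e + 1) * q ^ ((e + 1) * (e + 1 - 1) / 2) * gbq q (n + 1) (e + 1)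
      = (-1 : ℝ) ^ (e + 1) * q ^ ((e + 1) * (e + 1 - 1) / 2) * gbq q n (e + 1)
        + (-q ^ n) * ((-1 : ℝ) ^ e * q ^ (e * (e - 1) / 2) * gbq q n e) := by
    intro e he
    have hen : e ≤ n := by
      have := Finset.mem_range.mp he; omega
    rw [gbq_pascal hq n (e + 1) (by omega), show e + 1 - 1 = e by omega,
      show n + 1 - (e + 1) = n - e by omega, tri e]
    have hpow : q ^ (e * (e - 1) / 2 + e) * q ^ (n - e) = q ^ (e * (e - 1) / 2) * q ^ n := by
      rw [← pow_add, ← pow_add]; congr 1; omega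
    have hsign : (-1 : ℝ) ^ (e + 1) = -(-1 : ℝ) ^ e := by
      rw [pow_succ]; ring
    rw [hsign]
    linear_combination (-(-1 : ℝ) ^ e * gbq q n e) * hpow
  rw [Finset.sum_congr rfl hrw, Finset.sum_add_distrib, ← Finset.mul_sum]
  have hfs : ∑ e ∈ Finset.range (n + 1),
      (-1 : ℝ) ^ (e + 1) * q ^ ((e + 1) * (e + 1 - 1) / 2) * gbq q n (e + 1)
      = (∑ d ∈ Finset.range (n + 1), (-1 : ℝ) ^ d * q ^ (d * (d - 1) / 2) * gbq q n d) - 1 := by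
    have h2 := Finset.sum_range_succ' (fun d => (-1 : ℝ) ^ d * q ^ (d * (d - 1) / 2) * gbq q n d) (n + 1)
    have h3 := Finset.sum_range_succ (fun d => (-1 : ℝ) ^ d * q ^ (d * (d - 1) / 2) * gbq q n d) (n + 1)
    simp only [gbq_overflow q (show n < n + 1 by omega), gbq_zero hq, pow_zero, mul_one,
      mul_zero, add_zero, Nat.zero_mul, Nat.zero_div, one_mul] at h2 h3
    rw [h3] at h2
    linarith [h2]
  rw [hfs, gbq_zero hq]
  ring_nf

lemma alt_sum {q : ℝ} (hq : 1 < q) : ∀ n : ℕ, 1 ≤ n →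
    ∑ d ∈ Finset.range (n + 1), (-1 : ℝ) ^ d * q ^ (d * (d - 1) / 2) * gbq q n d = 0 := by
  intro n hn
  induction n with
  | zero => omega
  | succ m ih =>
    rcases Nat.eq_or_lt_of_le hn with h1 | h1
    · -- m = 0
      have hm : m = 0 := by omega
      subst hm
      rw [Finset.sum_range_succ, Finset.sum_range_one]
      simp [gbq_zero hq, gbq_self hq]
    · rw [show m + 1 + 1 = m + 2 from rfl] at *
      rw [alt_step hq m, ih (by omega), mul_zero]

lemma gbinom_self {q : ℝ} (hq : 1 < q) (n : ℕ) : gbinom q n n = 1 := by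
  rw [gbinom_eq_gbq hq le_rfl, gbq_self hq]

lemma trinom {q : ℝ} (hq : 1 < q) {k i m : ℕ} (h1 : 1 ≤ k) (h2 : k ≤ i) (h3 : i ≤ m) :
    gbinom q (m - 1) (i - 1) * gbinom q (i - 1) (k - 1) =
    gbinom q (m - 1) (k - 1) * gbq q (m - k) (i - k) := by
  obtain ⟨a, rfl⟩ : ∃ a, k = a + 1 := ⟨k - 1, by omega⟩
  obtain ⟨b, rfl⟩ : ∃ b, i = a + 1 + b := ⟨i - (a + 1), by omega⟩
  obtain ⟨c, rfl⟩ : ∃ c, m = a + 1 + b + c := ⟨m - (a + 1 + b), by omega⟩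
  simp only [show a + 1 + b + c - 1 = a + b + c by omega, show a + 1 + b - 1 = a + b by omega,
    show a + 1 - 1 = a by omega, show a + 1 + b + c - (a + 1) = b + c by omega,
    show a + 1 + b - (a + 1) = b by omega]
  rw [gbinom_eq_phiP hq (show a + b ≤ a + b + c by omega),
    gbinom_eq_phiP hq (show a ≤ a + b by omega),
    gbinom_eq_phiP hq (show a ≤ a + b + c by omega), gbq, if_pos (show b ≤ b + c by omega)]
  simp only [show a + b + c - (a + b) = c by omega, show a + b - a = b by omega,
    show a + b + c - a = b + c by omega, show b + c - b = c by omega]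
  have ha := phiP_ne_zero hq a
  have hb := phiP_ne_zero hq b
  have hc := phiP_ne_zero hq c
  have hab := phiP_ne_zero hq (a + b)
  have hbc := phiP_ne_zero hq (b + c)
  have habc := phiP_ne_zero hq (a + b + c)
  field_simp

lemma Icc_succ_eq_Ioc (a b : ℕ) : Finset.Icc (a + 1) b = Finset.Ioc a b := by
  ext x; simp only [Finset.mem_Icc, Finset.mem_Ioc]; omega

lemma prodsplit (q : ℝ) {k i m : ℕ} (h2 : k ≤ i) (h3 : i ≤ m) :
    (∏ j ∈ Finset.Icc (k + 1) i, (q ^ j + 1)) * ∏ j ∈ Finset.Icc (i + 1) m, (q ^ j + 1)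
    = ∏ j ∈ Finset.Icc (k + 1) m, (q ^ j + 1) := by
  rw [Icc_succ_eq_Ioc, Icc_succ_eq_Ioc, Icc_succ_eq_Ioc]
  exact Finset.prod_Ioc_consecutive _ h2 h3

lemma keylem {q : ℝ} (hq : 1 < q) (n k : ℕ) (h1 : 1 ≤ k) (h2 : k ≤ n) :
    ∑ i ∈ Finset.Icc k (n + 1), (-1 : ℝ) ^ (i - k) * q ^ ((i - k) * (i - k - 1) / 2)
      * (gbinom q n (i - 1) * ∏ j ∈ Finset.Icc (i + 1) (n + 1), (q ^ j + 1))
      * (gbinom q (i - 1) (k - 1) * ∏ j ∈ Finset.Icc (k + 1) i, (q ^ j + 1)) = 0 := by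
  have hC : ∀ i ∈ Finset.Icc k (n + 1),
      (-1 : ℝ) ^ (i - k) * q ^ ((i - k) * (i - k - 1) / 2)
      * (gbinom q n (i - 1) * ∏ j ∈ Finset.Icc (i + 1) (n + 1), (q ^ j + 1))
      * (gbinom q (i - 1) (k - 1) * ∏ j ∈ Finset.Icc (k + 1) i, (q ^ j + 1))
      = (gbinom q n (k - 1) * ∏ j ∈ Finset.Icc (k + 1) (n + 1), (q ^ j + 1))
        * ((-1 : ℝ) ^ (i - k) * q ^ ((i - k) * (i - k - 1) / 2) * gbq q (n + 1 - k) (i - k)) := by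
    intro i hi
    have hik : k ≤ i := (Finset.mem_Icc.mp hi).1
    have hin : i ≤ n + 1 := (Finset.mem_Icc.mp hi).2
    have e1 : gbinom q n (i - 1) * gbinom q (i - 1) (k - 1)
        = gbinom q n (k - 1) * gbq q (n + 1 - k) (i - k) := by
      have := trinom hq h1 hik hin
      simpa using this
    have e2 : (∏ j ∈ Finset.Icc (k + 1) i, (q ^ j + 1))
        * ∏ j ∈ Finset.Icc (i + 1) (n + 1), (q ^ j + 1)
        = ∏ j ∈ Finset.Icc (k + 1) (n + 1), (q ^ j + 1) := prodsplit q hik hin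
    linear_combination ((-1 : ℝ) ^ (i - k) * q ^ ((i - k) * (i - k - 1) / 2)
        * (∏ j ∈ Finset.Icc (k + 1) i, (q ^ j + 1))
        * (∏ j ∈ Finset.Icc (i + 1) (n + 1), (q ^ j + 1))) * e1
      + ((-1 : ℝ) ^ (i - k) * q ^ ((i - k) * (i - k - 1) / 2)
        * (gbinom q n (k - 1) * gbq q (n + 1 - k) (i - k))) * e2
  rw [Finset.sum_congr rfl hC, ← Finset.mul_sum]
  have hre : ∑ i ∈ Finset.Icc k (n + 1),
      ((-1 : ℝ) ^ (i - k) * q ^ ((i - k) * (i - k - 1) / 2) * gbq q (n + 1 - k) (i - k))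
      = ∑ d ∈ Finset.range (n + 1 - k + 1),
        ((-1 : ℝ) ^ d * q ^ (d * (d - 1) / 2) * gbq q (n + 1 - k) d) := by
    apply Finset.sum_nbij' (fun i => i - k) (fun d => d + k)
    · intro a ha
      have := Finset.mem_Icc.mp ha
      simp only [Finset.mem_range]; omega
    · intro a ha
      have := Finset.mem_range.mp ha
      simp only [Finset.mem_Icc]; omega
    · intro a ha
      have := Finset.mem_Icc.mp ha; omega
    · intro a ha
      have := Finset.mem_range.mp ha; omega
    · intro a ha; rfl
  rw [hre, alt_sum hq (n + 1 - k) (by omega), mul_zero]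

lemma sumswap (n : ℕ) (G : ℕ → ℕ → ℝ) :
    ∑ i ∈ Finset.Icc 1 n, ∑ k ∈ Finset.Icc 1 i, G i k
    = ∑ k ∈ Finset.Icc 1 n, ∑ i ∈ Finset.Icc k n, G i k := by
  rw [Finset.sum_sigma', Finset.sum_sigma']
  apply Finset.sum_nbij' (fun p => ⟨p.2, p.1⟩) (fun p => ⟨p.2, p.1⟩)
  · intro a ha
    simp only [Finset.mem_sigma, Finset.mem_Icc] at *
    omega
  · intro a ha
    simp only [Finset.mem_sigma, Finset.mem_Icc] at *
    omega
  · intro a _; rfl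
  · intro a _; rfl
  · intro a _; rfl

theorem stmt6 (q : ℝ) (hq : 1 < q) (N : ℕ) (X : ℕ → ℝ)
    (hX1 : X 1 = q ^ (2 * N))
    (hX : ∀ m : ℕ, 1 ≤ m → X m = q ^ (2 * m * N) -
      ∑ i ∈ Finset.Icc 1 (m - 1),
        gbinom q (m - 1) (i - 1) * (∏ j ∈ Finset.Icc (i + 1) m, (q ^ j + 1)) * X i) :
    ∀ m : ℕ, 1 ≤ m → X m = ∑ i ∈ Finset.Icc 1 m,
      (-1 : ℝ) ^ (m - i) * q ^ ((m - i) * (m - i - 1) / 2) * gbinom q (m - 1) (i - 1) *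
        (∏ j ∈ Finset.Icc (i + 1) m, (q ^ j + 1)) * q ^ (2 * i * N) := by
  intro m
  induction m using Nat.strong_induction_on with
  | _ m ih =>
    intro hm
    obtain ⟨n, rfl⟩ : ∃ n, m = n + 1 := ⟨m - 1, by omega⟩
    rw [hX (n + 1) hm]
    simp only [Nat.add_sub_cancel]
    have hXi : ∀ i ∈ Finset.Icc 1 n,
        gbinom q n (i - 1) * (∏ j ∈ Finset.Icc (i + 1) (n + 1), (q ^ j + 1)) * X i
        = ∑ k ∈ Finset.Icc 1 i,
            gbinom q n (i - 1) * (∏ j ∈ Finset.Icc (i + 1) (n + 1), (q ^ j + 1)) *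
              ((-1 : ℝ) ^ (i - k) * q ^ ((i - k) * (i - k - 1) / 2) * gbinom q (i - 1) (k - 1) *
                (∏ j ∈ Finset.Icc (k + 1) i, (q ^ j + 1)) * q ^ (2 * k * N)) := by
      intro i hi
      have h := Finset.mem_Icc.mp hi
      rw [ih i (by omega) h.1, Finset.mul_sum]
    rw [Finset.sum_congr rfl hXi]
    rw [show (∑ i ∈ Finset.Icc 1 n, ∑ k ∈ Finset.Icc 1 i,
          gbinom q n (i - 1) * (∏ j ∈ Finset.Icc (i + 1) (n + 1), (q ^ j + 1)) *
            ((-1 : ℝ) ^ (i - k) * q ^ ((i - k) * (i - k - 1) / 2) * gbinom q (i - 1) (k - 1) *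
              (∏ j ∈ Finset.Icc (k + 1) i, (q ^ j + 1)) * q ^ (2 * k * N)))
        = ∑ k ∈ Finset.Icc 1 n, ∑ i ∈ Finset.Icc k n,
          gbinom q n (i - 1) * (∏ j ∈ Finset.Icc (i + 1) (n + 1), (q ^ j + 1)) *
            ((-1 : ℝ) ^ (i - k) * q ^ ((i - k) * (i - k - 1) / 2) * gbinom q (i - 1) (k - 1) *
              (∏ j ∈ Finset.Icc (k + 1) i, (q ^ j + 1)) * q ^ (2 * k * N))
      from sumswap n _]
    have hk : ∀ k ∈ Finset.Icc 1 n,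
        (∑ i ∈ Finset.Icc k n,
          gbinom q n (i - 1) * (∏ j ∈ Finset.Icc (i + 1) (n + 1), (q ^ j + 1)) *
            ((-1 : ℝ) ^ (i - k) * q ^ ((i - k) * (i - k - 1) / 2) * gbinom q (i - 1) (k - 1) *
              (∏ j ∈ Finset.Icc (k + 1) i, (q ^ j + 1)) * q ^ (2 * k * N)))
        = -((-1 : ℝ) ^ (n + 1 - k) * q ^ ((n + 1 - k) * (n + 1 - k - 1) / 2) * gbinom q n (k - 1)
            * (∏ j ∈ Finset.Icc (k + 1) (n + 1), (q ^ j + 1)) * q ^ (2 * k * N)) := by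
      intro k hk0
      have hk1 := Finset.mem_Icc.mp hk0
      have hkey := keylem hq n k hk1.1 hk1.2
      rw [Finset.sum_Icc_succ_top (show k ≤ n + 1 by omega)] at hkey
      have hT : ∀ i ∈ Finset.Icc k n,
          gbinom q n (i - 1) * (∏ j ∈ Finset.Icc (i + 1) (n + 1), (q ^ j + 1)) *
            ((-1 : ℝ) ^ (i - k) * q ^ ((i - k) * (i - k - 1) / 2) * gbinom q (i - 1) (k - 1) *
              (∏ j ∈ Finset.Icc (k + 1) i, (q ^ j + 1)) * q ^ (2 * k * N))
          = ((-1 : ℝ) ^ (i - k) * q ^ ((i - k) * (i - k - 1) / 2)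
            * (gbinom q n (i - 1) * ∏ j ∈ Finset.Icc (i + 1) (n + 1), (q ^ j + 1))
            * (gbinom q (i - 1) (k - 1) * ∏ j ∈ Finset.Icc (k + 1) i, (q ^ j + 1)))
              * q ^ (2 * k * N) := by
        intro i _; ring
      rw [Finset.sum_congr rfl hT, ← Finset.sum_mul]
      have hsum : (∑ i ∈ Finset.Icc k n, (-1 : ℝ) ^ (i - k) * q ^ ((i - k) * (i - k - 1) / 2)
            * (gbinom q n (i - 1) * ∏ j ∈ Finset.Icc (i + 1) (n + 1), (q ^ j + 1))
            * (gbinom q (i - 1) (k - 1) * ∏ j ∈ Finset.Icc (k + 1) i, (q ^ j + 1)))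
          = -((-1 : ℝ) ^ (n + 1 - k) * q ^ ((n + 1 - k) * (n + 1 - k - 1) / 2)
            * (gbinom q n (n + 1 - 1) * ∏ j ∈ Finset.Icc (n + 1 + 1) (n + 1), (q ^ j + 1))
            * (gbinom q (n + 1 - 1) (k - 1) * ∏ j ∈ Finset.Icc (k + 1) (n + 1), (q ^ j + 1))) := by
        linarith [hkey]
      rw [hsum]
      simp only [Nat.add_sub_cancel, Finset.Icc_eq_empty (show ¬ (n + 1 + 1 ≤ n + 1) by omega),
        Finset.prod_empty, mul_one, gbinom_self hq]
      ring
    rw [Finset.sum_congr rfl hk]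
    rw [Finset.sum_Icc_succ_top (show 1 ≤ n + 1 by omega)]
    simp only [Nat.sub_self, pow_zero, one_mul, Nat.add_sub_cancel, gbinom_self hq,
      Finset.Icc_eq_empty (show ¬ (n + 1 + 1 ≤ n + 1) by omega), Finset.prod_empty, mul_one,
      Nat.zero_mul, Nat.zero_div]
    rw [Finset.sum_neg_distrib]
    ring
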